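/- Let $w : \mathbb{R} \to \mathbb{R}$ be twice differentiable with $0 < L \leq w \leq U$ and $|w''| \leq M$ everywhere. Let $\tau_0 > 0$, $\omega > 0$, $\sigma^2 = \omega^2 \tau$, and $Q(x;\tau) = \frac{\int k_{\sqrt{2\tau}\omega}(y;x) w(y)\,dy}{\int k_{\sqrt{\tau}\omega}(y;x) w(y)\,dy}$. If $\tau_0 < \frac{2L}{M\omega^2}$, then there exists a constant $C_1 > 0$ (one may take $C_1 = \max(\frac{M\omega^2}{2L - M\omega^2\tau_0}, \frac{3M\omega^2}{2L}))$ such that $|Q(x;\tau) - 1| \leq C_1 \tau$ for all $x \in \mathbb{R}$ and $0 < \tau < \tau_0$. -/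

import Mathlib

open MeasureTheory Real

/-- Gaussian density with mean `m` and standard deviation `σ`, evaluated at `y`. -/
noncomputable def gauss (σ m y : ℝ) : ℝ :=
  (Real.sqrt (2 * Real.pi) * σ)⁻¹ * Real.exp (-(y - m) ^ 2 / (2 * σ ^ 2))

/-- The ratio `Q(x; τ)` with kernel standard deviation `σ(τ) = ω √τ`. -/
noncomputable def Qfun (w : ℝ → ℝ) (ω τ x : ℝ) : ℝ :=
  (∫ y : ℝ, gauss (Real.sqrt (2 * τ) * ω) x y * w y) /
    ∫ y : ℝ, gauss (Real.sqrt τ * ω) x y * w y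

lemma gauss_nonneg {σ : ℝ} (hσ : 0 ≤ σ) (x y : ℝ) : 0 ≤ gauss σ x y := by
  unfold gauss; positivity

lemma gauss_continuous (σ x : ℝ) : Continuous (gauss σ x) := by
  unfold gauss; fun_prop

lemma gauss_shift {σ : ℝ} (x : ℝ) (g : ℝ → ℝ) :
    ∫ y : ℝ, gauss σ x y * g (y - x) = ∫ z : ℝ, gauss σ 0 z * g z := by
  have h : (fun y : ℝ => gauss σ x y * g (y - x))
      = fun y : ℝ => (fun z : ℝ => gauss σ 0 z * g z) (y - x) := by
    funext y; simp [gauss]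
  rw [h, integral_sub_right_eq_self (fun z : ℝ => gauss σ 0 z * g z) x]

lemma gauss_zero_eq {σ : ℝ} (hσ : 0 < σ) (z : ℝ) :
    gauss σ 0 z = (Real.sqrt (2 * Real.pi) * σ)⁻¹ * Real.exp (-(1/(2*σ^2)) * z ^ 2) := by
  unfold gauss
  rw [show -(z - 0) ^ 2 / (2 * σ ^ 2) = -(1/(2*σ^2)) * z ^ 2 by ring]

lemma integrable_gauss_mul {σ : ℝ} (hσ : 0 < σ) (x : ℝ) (g : ℝ → ℝ)
    (hg : Integrable (fun z : ℝ => Real.exp (-(1/(2*σ^2)) * z ^ 2) * g z)) :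
    Integrable (fun y : ℝ => gauss σ x y * g (y - x)) := by
  have h : (fun y : ℝ => gauss σ x y * g (y - x))
      = fun y : ℝ => (fun z : ℝ => (Real.sqrt (2 * Real.pi) * σ)⁻¹ *
          (Real.exp (-(1/(2*σ^2)) * z ^ 2) * g z)) (y - x) := by
    funext y
    simp only [gauss]
    rw [show -(y - x) ^ 2 / (2 * σ ^ 2) = -(1/(2*σ^2)) * (y - x) ^ 2 by ring]
    ring
  rw [h]
  exact ((hg.const_mul _).comp_sub_right x)

lemma integral_sq_exp_neg {b : ℝ} (hb : 0 < b) :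
    ∫ z : ℝ, z ^ 2 * Real.exp (-b * z ^ 2) = Real.sqrt (π / b) / (2 * b) := by
  have h1 : (fun z : ℝ => z ^ 2 * Real.exp (-b * z ^ 2))
      = fun z : ℝ => (fun t : ℝ => t ^ 2 * Real.exp (-b * t ^ 2)) |z| := by
    funext z; simp [sq_abs]
  rw [h1, integral_comp_abs (f := fun t : ℝ => t ^ 2 * Real.exp (-b * t ^ 2))]
  have h2 : ∫ t in Set.Ioi (0:ℝ), t ^ 2 * Real.exp (-b * t ^ 2)
      = ∫ t in Set.Ioi (0:ℝ), t ^ (2:ℝ) * Real.exp (-b * t ^ (2:ℝ)) := by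
    refine setIntegral_congr_fun measurableSet_Ioi (fun t ht => ?_)
    rw [show ((2:ℝ) = ((2:ℕ):ℝ)) by norm_num, Real.rpow_natCast]
  rw [h2, integral_rpow_mul_exp_neg_mul_rpow (by norm_num) (by norm_num) hb]
  have hG : Real.Gamma (((2:ℝ) + 1) / 2) = Real.sqrt π / 2 := by
    have : ((2:ℝ) + 1) / 2 = 1/2 + 1 := by norm_num
    rw [this, Real.Gamma_add_one (by norm_num), Real.Gamma_one_half_eq]
    ring
  rw [hG]
  have hb32 : b ^ (-((2:ℝ) + 1) / 2) = (Real.sqrt b * b)⁻¹ := by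
    have : (-((2:ℝ) + 1) / 2) = -(1/2 + 1) := by norm_num
    rw [this, Real.rpow_neg hb.le, Real.rpow_add hb, Real.rpow_one, ← Real.sqrt_eq_rpow]
  rw [hb32, Real.sqrt_div (le_of_lt Real.pi_pos)]
  have hsb : (0:ℝ) < Real.sqrt b := Real.sqrt_pos.mpr hb
  field_simp


section moments

variable {σ : ℝ} (hσ : 0 < σ) (x : ℝ)

private lemma hbpos (hσ : 0 < σ) : 0 < 1/(2*σ^2) := by positivity

private lemma sqrt_pi_fact (hσ : 0 < σ) :
    Real.sqrt (π / (1/(2*σ^2))) = Real.sqrt (2 * π) * σ := by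
  rw [show π / (1/(2*σ^2)) = (2 * π) * σ^2 by field_simp,
    Real.sqrt_mul (by positivity), Real.sqrt_sq hσ.le]

include hσ

lemma integral_gauss_one : ∫ y : ℝ, gauss σ x y = 1 := by
  have hs := gauss_shift (σ := σ) x (fun _ : ℝ => (1:ℝ))
  simp only [mul_one] at hs
  rw [hs]
  have h2 : (fun z : ℝ => gauss σ 0 z)
      = fun z : ℝ => (Real.sqrt (2 * Real.pi) * σ)⁻¹ * Real.exp (-(1/(2*σ^2)) * z ^ 2) := by
    funext z; exact gauss_zero_eq hσ z
  rw [h2, integral_const_mul, integral_gaussian, sqrt_pi_fact hσ]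
  field_simp

lemma integral_gauss_lin : ∫ y : ℝ, gauss σ x y * (y - x) = 0 := by
  rw [gauss_shift x (fun z => z)]
  have h := integral_neg_eq_self (fun z : ℝ => gauss σ 0 z * z) (volume : Measure ℝ)
  have h2 : ∀ z : ℝ, gauss σ 0 (-z) * (-z) = -(gauss σ 0 z * z) := by
    intro z
    rw [gauss_zero_eq hσ, gauss_zero_eq hσ]
    rw [show (-z)^2 = z^2 by ring]
    ring
  simp only [h2, integral_neg] at h
  linarith

lemma integral_gauss_sq : ∫ y : ℝ, gauss σ x y * (y - x) ^ 2 = σ ^ 2 := by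
  rw [gauss_shift x (fun z => z ^ 2)]
  have h2 : (fun z : ℝ => gauss σ 0 z * z ^ 2)
      = fun z : ℝ => (Real.sqrt (2 * Real.pi) * σ)⁻¹ *
          (z ^ 2 * Real.exp (-(1/(2*σ^2)) * z ^ 2)) := by
    funext z; rw [gauss_zero_eq hσ]; ring
  rw [h2, integral_const_mul, integral_sq_exp_neg (hbpos hσ), sqrt_pi_fact hσ]
  have h3 : (0:ℝ) < Real.sqrt (2 * π) := by positivity
  field_simp

lemma integrable_gauss : Integrable (gauss σ x) := by
  have h := integrable_gauss_mul hσ x (fun _ => (1:ℝ))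
    (by simpa using integrable_exp_neg_mul_sq (hbpos hσ))
  simpa using h

lemma integrable_gauss_lin : Integrable (fun y : ℝ => gauss σ x y * (y - x)) := by
  exact integrable_gauss_mul hσ x (fun z => z)
    (by simpa [mul_comm] using integrable_mul_exp_neg_mul_sq (hbpos hσ))

lemma integrable_gauss_sq : Integrable (fun y : ℝ => gauss σ x y * (y - x) ^ 2) := by
  refine integrable_gauss_mul hσ x (fun z => z ^ 2) ?_
  have h : Integrable fun z : ℝ => z ^ 2 * Real.exp (-(1/(2*σ^2)) * z ^ 2) := by
    have := integrable_rpow_mul_exp_neg_mul_sq (hbpos hσ) (s := ((2:ℕ):ℝ)) (by norm_num)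
    simpa [Real.rpow_natCast] using this
  simpa [mul_comm] using h

lemma integrable_gauss_bdd {w : ℝ → ℝ} {U : ℝ} (hw : Continuous w) (hbd : ∀ y, |w y| ≤ U) :
    Integrable (fun y : ℝ => gauss σ x y * w y) := by
  refine Integrable.mono' ((integrable_gauss hσ x).const_mul U)
    (((gauss_continuous σ x).mul hw).aestronglyMeasurable) ?_
  filter_upwards with y
  rw [Real.norm_eq_abs, abs_mul, abs_of_nonneg (gauss_nonneg hσ.le x y)]
  calc gauss σ x y * |w y| ≤ gauss σ x y * U :=
        mul_le_mul_of_nonneg_left (hbd y) (gauss_nonneg hσ.le x y)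
    _ = U * gauss σ x y := mul_comm _ _

end moments

section taylor

variable {w w' w'' : ℝ → ℝ} {M : ℝ}
variable (hw' : ∀ x, HasDerivAt w (w' x) x) (hw'' : ∀ x, HasDerivAt w' (w'' x) x)
variable (hM : ∀ x, |w'' x| ≤ M)

include hw'' hM in
lemma lip_w' : ∀ s t : ℝ, |w' s - w' t| ≤ M * |s - t| := by
  intro s t
  have h := Convex.norm_image_sub_le_of_norm_hasDerivWithin_le
    (f := w') (f' := w'') (s := Set.univ) (C := M)
    (fun u _ => (hw'' u).hasDerivWithinAt) (fun u _ => by simpa using hM u)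
    convex_univ (Set.mem_univ t) (Set.mem_univ s)
  simpa [Real.norm_eq_abs] using h

include hw' hw'' hM in
lemma taylor_bound (x y : ℝ) :
    |w y - w x - w' x * (y - x)| ≤ M / 2 * (y - x) ^ 2 := by
  have hM0 : 0 ≤ M := le_trans (abs_nonneg _) (hM 0)
  have hcont : Continuous w' := by
    rw [continuous_iff_continuousAt]; exact fun u => (hw'' u).continuousAt
  have hftc : w y - w x = ∫ t in x..y, w' t := by
    symm
    exact intervalIntegral.integral_eq_sub_of_hasDerivAt (fun t _ => hw' t)
      (hcont.intervalIntegrable x y)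
  have hconst : ∫ t in x..y, w' x = w' x * (y - x) := by
    simp [mul_comm]
  have hsplit : w y - w x - w' x * (y - x) = ∫ t in x..y, (w' t - w' x) := by
    rw [intervalIntegral.integral_sub (hcont.intervalIntegrable x y)
      (intervalIntegrable_const), hconst, ← hftc]
  rw [hsplit]
  rcases le_total x y with hxy | hxy
  · have hb : ∀ t ∈ Set.Ioc x y, |w' t - w' x| ≤ M * (t - x) := by
      intro t ht
      have := lip_w' hw'' hM t x
      rwa [abs_of_nonneg (by linarith [ht.1] : (0:ℝ) ≤ t - x)] at this
    have h1 : |∫ t in x..y, (w' t - w' x)| ≤ |∫ t in x..y, M * (t - x)| := by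
      rw [← Real.norm_eq_abs]
      apply intervalIntegral.norm_integral_le_abs_of_norm_le
      · rw [Set.uIoc_of_le hxy]
        filter_upwards [ae_restrict_mem measurableSet_Ioc] with t ht
        simpa using hb t ht
      · apply Continuous.intervalIntegrable; fun_prop
    have h2 : ∫ t in x..y, M * (t - x) = M * ((y - x) ^ 2 / 2) := by
      rw [intervalIntegral.integral_const_mul,
        intervalIntegral.integral_comp_sub_right (fun t => t) x]
      simp [integral_id]
      try ring
    rw [h2] at h1
    calc |∫ t in x..y, (w' t - w' x)| ≤ |M * ((y - x) ^ 2 / 2)| := h1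
      _ = M / 2 * (y - x) ^ 2 := by
          rw [abs_of_nonneg (by positivity)]; ring
  · have hb : ∀ t ∈ Set.Ioc y x, |w' t - w' x| ≤ M * (x - t) := by
      intro t ht
      have := lip_w' hw'' hM t x
      rwa [abs_of_nonpos (by linarith [ht.2] : t - x ≤ 0), neg_sub] at this
    have h1 : |∫ t in x..y, (w' t - w' x)| ≤ |∫ t in x..y, M * (x - t)| := by
      rw [← Real.norm_eq_abs]
      apply intervalIntegral.norm_integral_le_abs_of_norm_le
      · rw [Set.uIoc_of_ge hxy]
        filter_upwards [ae_restrict_mem measurableSet_Ioc] with t ht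
        simpa using hb t ht
      · apply Continuous.intervalIntegrable; fun_prop
    have h2 : ∫ t in x..y, M * (x - t) = -(M * ((y - x) ^ 2 / 2)) := by
      rw [intervalIntegral.integral_const_mul]
      have : ∫ t in x..y, (x - t) = ∫ t in x..y, ((fun s => x - s) t) := rfl
      rw [this]
      rw [intervalIntegral.integral_sub intervalIntegrable_const
        (Continuous.intervalIntegrable (by fun_prop) x y)]
      simp [integral_id]
      try ring
    rw [h2] at h1
    calc |∫ t in x..y, (w' t - w' x)| ≤ |-(M * ((y - x) ^ 2 / 2))| := h1
      _ = M / 2 * (y - x) ^ 2 := by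
          rw [abs_neg, abs_of_nonneg (by positivity)]; ring

end taylor

lemma gauss_approx {w w' w'' : ℝ → ℝ} {M U : ℝ}
    (hw' : ∀ x, HasDerivAt w (w' x) x) (hw'' : ∀ x, HasDerivAt w' (w'' x) x)
    (hM : ∀ x, |w'' x| ≤ M) (hbd : ∀ y, |w y| ≤ U)
    {σ : ℝ} (hσ : 0 < σ) (x : ℝ) :
    |(∫ y : ℝ, gauss σ x y * w y) - w x| ≤ M / 2 * σ ^ 2 := by
  have hcw : Continuous w := by
    rw [continuous_iff_continuousAt]; exact fun u => (hw' u).continuousAt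
  have hIw : Integrable (fun y : ℝ => gauss σ x y * w y) := integrable_gauss_bdd hσ x hcw hbd
  have hI0 : Integrable (gauss σ x) := integrable_gauss hσ x
  have hI1 : Integrable (fun y : ℝ => gauss σ x y * (y - x)) := integrable_gauss_lin hσ x
  have hI2 : Integrable (fun y : ℝ => gauss σ x y * (y - x) ^ 2) := integrable_gauss_sq hσ x
  set r : ℝ → ℝ := fun y => w y - w x - w' x * (y - x) with hr
  have hfun : (fun y : ℝ => gauss σ x y * r y)
      = fun y : ℝ => gauss σ x y * w y - w x * gauss σ x y
        - w' x * (gauss σ x y * (y - x)) := by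
    funext y; simp only [hr]; ring
  have hIr : Integrable (fun y : ℝ => gauss σ x y * r y) := by
    rw [hfun]
    exact (hIw.sub (hI0.const_mul _)).sub (hI1.const_mul _)
  have e1 : (∫ y : ℝ, gauss σ x y * w y) - w x = ∫ y : ℝ, gauss σ x y * r y := by
    have s1 : ∫ y : ℝ, gauss σ x y * r y
        = (∫ y : ℝ, (gauss σ x y * w y - w x * gauss σ x y))
          - ∫ y : ℝ, w' x * (gauss σ x y * (y - x)) := by
      rw [hfun]
      exact integral_sub (hIw.sub (hI0.const_mul _)) (hI1.const_mul _)
    have s2 : ∫ y : ℝ, (gauss σ x y * w y - w x * gauss σ x y)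
        = (∫ y : ℝ, gauss σ x y * w y) - ∫ y : ℝ, w x * gauss σ x y :=
      integral_sub hIw (hI0.const_mul _)
    rw [s1, s2, integral_const_mul, integral_const_mul,
      integral_gauss_one hσ x, integral_gauss_lin hσ x]
    ring
  rw [e1]
  have h2 : |∫ y : ℝ, gauss σ x y * r y| ≤ ∫ y : ℝ, gauss σ x y * (M / 2 * (y - x) ^ 2) := by
    calc |∫ y : ℝ, gauss σ x y * r y| ≤ ∫ y : ℝ, |gauss σ x y * r y| := by
          simpa only [Real.norm_eq_abs] using
            norm_integral_le_integral_norm (μ := volume) (fun y : ℝ => gauss σ x y * r y)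
      _ ≤ ∫ y : ℝ, gauss σ x y * (M / 2 * (y - x) ^ 2) := by
          apply integral_mono hIr.abs
          · have : (fun y : ℝ => gauss σ x y * (M / 2 * (y - x) ^ 2))
                = fun y : ℝ => (M / 2) * (gauss σ x y * (y - x) ^ 2) := by
              funext y; ring
            rw [this]; exact hI2.const_mul _
          · intro y
            show |gauss σ x y * r y| ≤ gauss σ x y * (M / 2 * (y - x) ^ 2)
            rw [abs_mul, abs_of_nonneg (gauss_nonneg hσ.le x y)]
            exact mul_le_mul_of_nonneg_left (taylor_bound hw' hw'' hM x y)
              (gauss_nonneg hσ.le x y)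
  have h3 : ∫ y : ℝ, gauss σ x y * (M / 2 * (y - x) ^ 2) = M / 2 * σ ^ 2 := by
    have : (fun y : ℝ => gauss σ x y * (M / 2 * (y - x) ^ 2))
        = fun y : ℝ => (M / 2) * (gauss σ x y * (y - x) ^ 2) := by
      funext y; ring
    rw [this, integral_const_mul, integral_gauss_sq hσ x]
  rw [h3] at h2
  exact h2

theorem Q_order_tau' (w w' w'' : ℝ → ℝ) (L U M ω τ₀ : ℝ)
    (hw' : ∀ x, HasDerivAt w (w' x) x)
    (hw'' : ∀ x, HasDerivAt w' (w'' x) x)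
    (hM : ∀ x, |w'' x| ≤ M)
    (hL : 0 < L) (hLU : ∀ x, L ≤ w x ∧ w x ≤ U)
    (hω : 0 < ω) (hτ₀ : 0 < τ₀) (hτ₀small : τ₀ < 2 * L / (M * ω ^ 2)) :
    ∃ C₁ > 0, ∀ x : ℝ, ∀ τ : ℝ, 0 < τ → τ < τ₀ →
      |(∫ y : ℝ, gauss (Real.sqrt (2 * τ) * ω) x y * w y) /
        (∫ y : ℝ, gauss (Real.sqrt τ * ω) x y * w y) - 1| ≤ C₁ * τ := by
  have hM0 : 0 ≤ M := le_trans (abs_nonneg _) (hM 0)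
  have hMpos : 0 < M := by
    rcases hM0.lt_or_eq with h | h
    · exact h
    · exfalso
      rw [← h] at hτ₀small
      norm_num at hτ₀small
      linarith
  have hMω : 0 < M * ω ^ 2 := mul_pos hMpos (pow_pos hω 2)
  have hden : 0 < L - M * ω ^ 2 * τ₀ / 2 := by
    have := (lt_div_iff₀ hMω).mp hτ₀small
    nlinarith
  refine ⟨3 * M * ω ^ 2 / (2 * (L - M * ω ^ 2 * τ₀ / 2)), ?_, ?_⟩
  · exact div_pos (mul_pos (mul_pos (by norm_num) hMpos) (pow_pos hω 2)) (by linarith)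
  intro x τ hτ hττ₀
  have hbdU : ∀ y, |w y| ≤ U := fun y => by
    rw [abs_of_pos (lt_of_lt_of_le hL (hLU y).1)]; exact (hLU y).2
  have hσ₁ : 0 < Real.sqrt τ * ω := mul_pos (Real.sqrt_pos.mpr hτ) hω
  have hσ₂ : 0 < Real.sqrt (2 * τ) * ω := mul_pos (Real.sqrt_pos.mpr (by linarith)) hω
  have σ₁sq : (Real.sqrt τ * ω) ^ 2 = τ * ω ^ 2 := by
    rw [mul_pow, Real.sq_sqrt hτ.le]
  have σ₂sq : (Real.sqrt (2 * τ) * ω) ^ 2 = 2 * τ * ω ^ 2 := by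
    rw [mul_pow, Real.sq_sqrt (by linarith : (0:ℝ) ≤ 2 * τ)]
  set N : ℝ := ∫ y : ℝ, gauss (Real.sqrt (2 * τ) * ω) x y * w y with hNdef
  set D : ℝ := ∫ y : ℝ, gauss (Real.sqrt τ * ω) x y * w y with hDdef
  have hN : |N - w x| ≤ M * ω ^ 2 * τ := by
    have h := gauss_approx hw' hw'' hM hbdU hσ₂ x
    rw [σ₂sq] at h
    calc |N - w x| ≤ M / 2 * (2 * τ * ω ^ 2) := h
      _ = M * ω ^ 2 * τ := by ring
  have hD : |D - w x| ≤ M * ω ^ 2 * τ / 2 := by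
    have h := gauss_approx hw' hw'' hM hbdU hσ₁ x
    rw [σ₁sq] at h
    calc |D - w x| ≤ M / 2 * (τ * ω ^ 2) := h
      _ = M * ω ^ 2 * τ / 2 := by ring
  have hmono : M * ω ^ 2 * τ ≤ M * ω ^ 2 * τ₀ :=
    mul_le_mul_of_nonneg_left hττ₀.le hMω.le
  have hDlb : L - M * ω ^ 2 * τ₀ / 2 ≤ D := by
    have h := (abs_le.mp hD).1
    have := (hLU x).1
    linarith
  have hDpos : 0 < D := lt_of_lt_of_le hden hDlb
  have h1 : |N - D| ≤ 3 / 2 * (M * ω ^ 2) * τ := by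
    have h2 := abs_sub_le N (w x) D
    rw [abs_sub_comm (w x) D] at h2
    linarith
  rw [div_sub_one (ne_of_gt hDpos), abs_div, abs_of_pos hDpos]
  calc |N - D| / D ≤ (3 / 2 * (M * ω ^ 2) * τ) / (L - M * ω ^ 2 * τ₀ / 2) :=
        div_le_div₀ (by positivity) h1 hden hDlb
    _ = 3 * M * ω ^ 2 / (2 * (L - M * ω ^ 2 * τ₀ / 2)) * τ := by
        field_simp

theorem Q_order_tau (w w' w'' : ℝ → ℝ) (L U M ω τ₀ : ℝ)
    (hw' : ∀ x, HasDerivAt w (w' x) x)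
    (hw'' : ∀ x, HasDerivAt w' (w'' x) x)
    (hM : ∀ x, |w'' x| ≤ M)
    (hL : 0 < L) (hLU : ∀ x, L ≤ w x ∧ w x ≤ U)
    (hω : 0 < ω) (hτ₀ : 0 < τ₀) (hτ₀small : τ₀ < 2 * L / (M * ω ^ 2)) :
    ∃ C₁ > 0, ∀ x : ℝ, ∀ τ : ℝ, 0 < τ → τ < τ₀ →
      |Qfun w ω τ x - 1| ≤ C₁ * τ := by
  obtain ⟨C₁, hC₁, h⟩ := Q_order_tau' w w' w'' L U M ω τ₀ hw' hw'' hM hL hLU hω hτ₀ hτ₀small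
  exact ⟨C₁, hC₁, fun x τ h1 h2 => by simpa [Qfun] using h x τ h1 h2⟩
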